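/- Let P be a finite set of forecasts, and for each p ∈ P let S(p) be a finite set of indices with n(p) = |S(p)| and T = Σ_p n(p). Suppose: (a) for every family {f'_p} with f'_p(x)² ≤ (1+√B)² the contextual swap regret (1/T) Σ_p Σ_{t∈S(p)} [(p - y_t)² - (f'_p(x_t) - y_t)²] is at most α/B², and (b) the class F is closed under affine transformations and contains functions bounded by B with B ≥ 1. Then for every family {f_p} with f_p(x)² ≤ B, the L2-swap-multicalibration error Σ_p (n(p)/T) · ((1/n(p)) Σ_{t∈S(p)} f_p(x_t)(y_t - p))² is at most α. -/

import Mathlib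

set_option maxHeartbeats 1000000

lemma keyPos (t N Sy W1 W0 p : ℝ) (ht : 1 ≤ t) (hN : 0 ≤ N)
    (hSy0 : 0 ≤ Sy) (hSyN : Sy ≤ N) (hp0 : 0 ≤ p) (hp1 : p ≤ 1)
    (hW1u : W1 ≤ t*Sy) (hW1l : -(t*Sy) ≤ W1)
    (hW0u : W0 ≤ t*(N - Sy)) (hW0l : -(t*(N - Sy)) ≤ W0)
    (hz : 0 ≤ N*p - Sy + (W1 + W0)/2) :
    (1 - p)*W1 - p*W0 ≤ N*t^4/2 + t^2*(N*p - Sy + (W1 + W0)/2) := by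
  rcases le_or_gt (2*(1 - p)) (t^2) with hα | hγ
  · have h1 : 0 ≤ (t^2/2 + p - 1) * (t*Sy + W1) :=
      mul_nonneg (by linarith) (by linarith)
    have h2 : 0 ≤ (p + t^2/2) * (t*(N - Sy) + W0) :=
      mul_nonneg (by nlinarith) (by linarith)
    have h3 : 0 ≤ (t^2 - t) * (N*t^2/2 + N*p - Sy) := by
      have ha : (0:ℝ) ≤ t^2 - t := by nlinarith
      have hb : (0:ℝ) ≤ N*t^2/2 + N*p - Sy := by nlinarith [mul_nonneg hN (show (0:ℝ) ≤ t^2/2 + p - 1 by linarith)]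
      exact mul_nonneg ha hb
    nlinarith [h1, h2, h3]
  · rcases le_or_gt (Sy - N*p) (t*N/2) with hb | ha
    · have ht2p : 0 ≤ t - 2*p := by nlinarith [mul_nonneg (show (0:ℝ) ≤ t - 1 by linarith) (show (0:ℝ) ≤ t + 2 by linarith)]
      have h1 : 0 ≤ (t^2 + 2*p) * (N*p - Sy + (W1 + W0)/2) :=
        mul_nonneg (by nlinarith) hz
      have h2 : 0 ≤ (t - 2*p) * (N*p + t*N/2 - Sy) := mul_nonneg ht2p (by linarith)
      have h3 : 0 ≤ N * (t^4 - t^2) := by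
        have h1t : (1:ℝ) ≤ t^2 := by nlinarith
        have : (0:ℝ) ≤ t^4 - t^2 := by nlinarith [mul_nonneg (sq_nonneg t) (sub_nonneg.mpr h1t)]
        exact mul_nonneg hN this
      nlinarith [h1, h2, h3, hW1u]
    · exfalso
      have hr : t*Sy + t*(N - Sy) = t*N := by ring
      linarith [hz, hW1u, hW0u, ha, hr]

lemma keyAbs (t N Sy W1 W0 p : ℝ) (ht : 1 ≤ t) (hN : 0 ≤ N)
    (hSy0 : 0 ≤ Sy) (hSyN : Sy ≤ N) (hp0 : 0 ≤ p) (hp1 : p ≤ 1)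
    (hW1u : W1 ≤ t*Sy) (hW1l : -(t*Sy) ≤ W1)
    (hW0u : W0 ≤ t*(N - Sy)) (hW0l : -(t*(N - Sy)) ≤ W0) :
    (1 - p)*W1 - p*W0 ≤ N*t^4/2 + t^2*|N*p - Sy + (W1 + W0)/2| := by
  rcases le_or_gt 0 (N*p - Sy + (W1 + W0)/2) with h | h
  · rw [abs_of_nonneg h]
    exact keyPos t N Sy W1 W0 p ht hN hSy0 hSyN hp0 hp1 hW1u hW1l hW0u hW0l h
  · rw [abs_of_neg h]
    have hk := keyPos t N (N - Sy) (-W0) (-W1) (1 - p) ht hN (by linarith) (by linarith)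
      (by linarith) (by linarith)
      (by linarith) (by linarith)
      (by rw [show N - (N - Sy) = Sy by ring]; linarith)
      (by rw [show N - (N - Sy) = Sy by ring]; linarith)
      (by nlinarith)
    nlinarith [hk]

lemma c3 (t N Sy SF SW Sff p : ℝ) (ht : 1 ≤ t) (hN : 0 < N) (hSy0 : 0 ≤ Sy) (hSyN : Sy ≤ N)
    (hp0 : 0 ≤ p) (hp1 : p ≤ 1)
    (hW1u : SW ≤ t*Sy) (hW1l : -(t*Sy) ≤ SW)
    (hW0u : SF - SW ≤ t*(N - Sy)) (hW0l : -(t*(N - Sy)) ≤ SF - SW)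
    (hff : Sff ≤ N*t^2)
    (hA : N*t^4/2 ≤ SW - p*SF) :
    (SW - p*SF)^2/t^4 ≤ (N*p - Sy)^2 + (N*SW - Sy*SF) - (N*Sff - SF^2)/4 := by
  have ht0 : (0:ℝ) < t := by linarith
  have hkey := keyAbs t N Sy SW (SF - SW) p ht hN.le hSy0 hSyN hp0 hp1 hW1u hW1l hW0u hW0l
  -- hkey : (1-p)*SW - p*(SF - SW) ≤ N*t^4/2 + t^2*|N*p - Sy + (SW + (SF - SW))/2|
  have hk : SW - p*SF - N*t^4/2 ≤ t^2*|N*p - Sy + (SW + (SF - SW))/2| := by nlinarith [hkey]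
  have hk0 : 0 ≤ SW - p*SF - N*t^4/2 := by linarith
  have hsq : (SW - p*SF - N*t^4/2)^2 ≤ (t^2*|N*p - Sy + (SW + (SF - SW))/2|)^2 :=
    pow_le_pow_left₀ hk0 hk 2
  rw [mul_pow, sq_abs] at hsq
  rw [div_le_iff₀ (by positivity : (0:ℝ) < t^4)]
  have hffm : N*t^4/4 * Sff ≤ N*t^4/4 * (N*t^2) :=
    mul_le_mul_of_nonneg_left hff (by positivity)
  have h1t : (1:ℝ) ≤ t^2 := by nlinarith
  have hlast : 0 ≤ N^2 * (t^6 * (t^2 - 1)) :=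
    mul_nonneg (sq_nonneg N) (mul_nonneg (by positivity) (by linarith))
  nlinarith [hsq, hffm, hlast]

lemma c1iden (SA E1 SF Sff N t : ℝ) (hN : N ≠ 0) (ht : t ≠ 0) :
    (E1^2 + 2*(SA/(N*t^4))*(N*SA + E1*SF) - (SA/(N*t^4))^2*(N*Sff - SF^2)) - SA^2/t^4
      = ((N*t^4*E1 + SA*SF)^2 + SA^2*N*(N*t^4 - Sff))/(N^2*t^8) := by
  field_simp
  ring

lemma core (t N Sy SF SW Sff p : ℝ) (ht : 1 ≤ t) (hN : 0 < N) (hSy0 : 0 ≤ Sy) (hSyN : Sy ≤ N)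
    (hW1u : SW ≤ t*Sy) (hW1l : -(t*Sy) ≤ SW)
    (hW0u : SF - SW ≤ t*(N - Sy)) (hW0l : -(t*(N - Sy)) ≤ SF - SW)
    (hff : Sff ≤ N*t^2) :
    ∃ c : ℝ, |c| ≤ 1/2 ∧
      (SW - p*SF)^2/t^4 ≤ (N*p - Sy)^2 + 2*c*(N*SW - Sy*SF) - c^2*(N*Sff - SF^2) := by
  have ht0 : (0:ℝ) < t := by linarith
  have ht4 : (0:ℝ) < t^4 := by positivity
  have h1t : (1:ℝ) ≤ t^2 := by nlinarith
  rcases lt_or_ge p 0 with hp | hp0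
  · -- p < 0 : take c = 0
    refine ⟨0, by norm_num, ?_⟩
    have h1 : (1-p)*SW ≤ (1-p)*(t*Sy) := mul_le_mul_of_nonneg_left hW1u (by linarith)
    have h2 : (-p)*(SF - SW) ≤ (-p)*(t*(N - Sy)) := mul_le_mul_of_nonneg_left hW0u (by linarith)
    have h1' : (1-p)*(-(t*Sy)) ≤ (1-p)*SW := mul_le_mul_of_nonneg_left hW1l (by linarith)
    have h2' : (-p)*(-(t*(N - Sy))) ≤ (-p)*(SF - SW) := mul_le_mul_of_nonneg_left hW0l (by linarith)
    have hup : SW - p*SF ≤ t*(Sy - N*p) := by nlinarith [h1, h2]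
    have hlo : -(t*(Sy - N*p)) ≤ SW - p*SF := by nlinarith [h1', h2']
    rw [div_le_iff₀ ht4]
    have hprod : 0 ≤ (t*(Sy - N*p) - (SW - p*SF)) * (t*(Sy - N*p) + (SW - p*SF)) :=
      mul_nonneg (by linarith) (by linarith)
    have hE : 0 ≤ (t^2*(t^2 - 1)) * (Sy - N*p)^2 :=
      mul_nonneg (mul_nonneg (sq_nonneg t) (by linarith)) (sq_nonneg _)
    nlinarith [hprod, hE]
  rcases lt_or_ge 1 p with hp1 | hp1
  · -- 1 < p : take c = 0
    refine ⟨0, by norm_num, ?_⟩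
    have h1 : p*(SF - SW) ≤ p*(t*(N - Sy)) := mul_le_mul_of_nonneg_left hW0u (by linarith)
    have h2 : (p-1)*SW ≤ (p-1)*(t*Sy) := mul_le_mul_of_nonneg_left hW1u (by linarith)
    have h1' : p*(-(t*(N - Sy))) ≤ p*(SF - SW) := mul_le_mul_of_nonneg_left hW0l (by linarith)
    have h2' : (p-1)*(-(t*Sy)) ≤ (p-1)*SW := mul_le_mul_of_nonneg_left hW1l (by linarith)
    have hup : -(SW - p*SF) ≤ t*(N*p - Sy) := by nlinarith [h1, h2]
    have hlo : -(t*(N*p - Sy)) ≤ -(SW - p*SF) := by nlinarith [h1', h2']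
    rw [div_le_iff₀ ht4]
    have hprod : 0 ≤ (t*(N*p - Sy) - (SW - p*SF)) * (t*(N*p - Sy) + (SW - p*SF)) :=
      mul_nonneg (by linarith) (by linarith)
    have hE : 0 ≤ (t^2*(t^2 - 1)) * (N*p - Sy)^2 :=
      mul_nonneg (mul_nonneg (sq_nonneg t) (by linarith)) (sq_nonneg _)
    nlinarith [hprod, hE]
  -- 0 ≤ p ≤ 1
  rcases le_or_gt (SW - p*SF) (N*t^4/2) with hA1 | hA1
  · rcases le_or_gt (-(N*t^4/2)) (SW - p*SF) with hA0 | hA0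
    · -- C1 : |SA| ≤ N t^4/2, c = SA/(N t^4)
      refine ⟨(SW - p*SF)/(N*t^4), ?_, ?_⟩
      · rw [abs_div, abs_of_pos (by positivity : (0:ℝ) < N*t^4), div_le_iff₀ (by positivity)]
        rw [abs_le]
        constructor <;> nlinarith
      · have hNt : (N:ℝ)*t^4 ≠ 0 := by positivity
        have hrw : N*SW - Sy*SF = N*(SW - p*SF) + (N*p - Sy)*SF := by ring
        have key := c1iden (SW - p*SF) (N*p - Sy) SF Sff N t (by positivity) (by positivity)
        rw [← hrw] at key
        have hSffle : Sff ≤ N*t^4 := by nlinarith [mul_nonneg (mul_nonneg hN.le (sq_nonneg t)) (show (0:ℝ) ≤ t^2 - 1 by linarith)]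
        have hpos : 0 ≤ ((N*t^4*(N*p - Sy) + (SW - p*SF)*SF)^2
              + (SW - p*SF)^2*N*(N*t^4 - Sff)) :=
          add_nonneg (sq_nonneg _)
            (mul_nonneg (mul_nonneg (sq_nonneg _) hN.le) (by linarith))
        have := div_nonneg hpos (show (0:ℝ) ≤ N^2*t^8 by positivity)
        linarith [key, this]
    · -- SA < -N t^4/2 : c = -1/2
      refine ⟨-(1/2), by rw [abs_le]; norm_num, ?_⟩
      have hc3 := c3 t N Sy (-SF) (-SW) Sff p ht hN hSy0 hSyN hp0 hp1
        (by linarith) (by linarith) (by linarith) (by linarith) hff (by linarith)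
      rw [div_le_iff₀ ht4] at hc3 ⊢
      have hr2 : ((-SW) - p*(-SF))^2 = (SW - p*SF)^2 := by ring
      rw [hr2] at hc3
      linarith [hc3]
  · -- SA > N t^4/2 : c = 1/2
    refine ⟨1/2, by rw [abs_le]; norm_num, ?_⟩
    have hc3 := c3 t N Sy SF SW Sff p ht hN hSy0 hSyN hp0 hp1 hW1u hW1l hW0u hW0l hff
      (by linarith)
    rw [div_le_iff₀ ht4] at hc3 ⊢
    linarith [hc3]

lemma perP {ι : Type*} (s : Finset ι) (g yv : ι → ℝ) (hy : ∀ i ∈ s, yv i = 0 ∨ yv i = 1)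
    (t : ℝ) (ht : 1 ≤ t) (hg : ∀ i ∈ s, (g i)^2 ≤ t^2) (p : ℝ) (hs : s.Nonempty) :
    ∃ c b : ℝ, |c| ≤ 1/2 ∧ |b| ≤ 1 + t/2 ∧
      (∑ i ∈ s, g i * (yv i - p))^2 / ((s.card : ℝ) * t^4) ≤
        ∑ i ∈ s, ((p - yv i)^2 - (c * g i + b - yv i)^2) := by
  have ht0 : (0:ℝ) < t := by linarith
  have hN : (0:ℝ) < (s.card : ℝ) := by exact_mod_cast Finset.card_pos.mpr hs
  set N := (s.card : ℝ) with hNdef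
  set Sy := ∑ i ∈ s, yv i with hSydef
  set SF := ∑ i ∈ s, g i with hSFdef
  set SW := ∑ i ∈ s, g i * yv i with hSWdef
  set Sff := ∑ i ∈ s, (g i)^2 with hSffdef
  have hy01 : ∀ i ∈ s, 0 ≤ yv i ∧ yv i ≤ 1 := by
    intro i hi; rcases hy i hi with h | h <;> rw [h] <;> norm_num
  have hgle : ∀ i ∈ s, -t ≤ g i ∧ g i ≤ t := by
    intro i hi
    have h := hg i hi
    constructor
    · nlinarith [sq_nonneg (g i + t)]
    · nlinarith [sq_nonneg (g i - t)]
  have hSy0 : 0 ≤ Sy := Finset.sum_nonneg (fun i hi => (hy01 i hi).1)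
  have hSyN : Sy ≤ N := by
    calc Sy ≤ ∑ _i ∈ s, (1:ℝ) := Finset.sum_le_sum (fun i hi => (hy01 i hi).2)
    _ = N := by simp [hNdef]
  have hW1u : SW ≤ t*Sy := by
    rw [Finset.mul_sum]
    exact Finset.sum_le_sum (fun i hi =>
      mul_le_mul_of_nonneg_right (hgle i hi).2 (hy01 i hi).1)
  have hW1l : -(t*Sy) ≤ SW := by
    have : ∑ i ∈ s, -(t * yv i) ≤ SW :=
      Finset.sum_le_sum (fun i hi => by nlinarith [(hgle i hi).1, (hy01 i hi).1])
    calc -(t*Sy) = ∑ i ∈ s, -(t * yv i) := by rw [Finset.mul_sum, ← Finset.sum_neg_distrib]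
    _ ≤ SW := this
  have hSFW : SF - SW = ∑ i ∈ s, g i * (1 - yv i) := by
    rw [← Finset.sum_sub_distrib]
    exact Finset.sum_congr rfl (fun i hi => by ring)
  have hNSy : N - Sy = ∑ i ∈ s, (1 - yv i) := by
    rw [Finset.sum_sub_distrib]
    simp [hNdef, hSydef]
  have hW0u : SF - SW ≤ t*(N - Sy) := by
    rw [hSFW, hNSy, Finset.mul_sum]
    exact Finset.sum_le_sum (fun i hi =>
      mul_le_mul_of_nonneg_right (hgle i hi).2 (by linarith [(hy01 i hi).2]))
  have hW0l : -(t*(N - Sy)) ≤ SF - SW := by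
    rw [hSFW, hNSy, Finset.mul_sum, ← Finset.sum_neg_distrib]
    exact Finset.sum_le_sum (fun i hi => by nlinarith [(hgle i hi).1, (hy01 i hi).2])
  have hff : Sff ≤ N*t^2 := by
    calc Sff ≤ ∑ _i ∈ s, t^2 := Finset.sum_le_sum hg
    _ = N*t^2 := by simp [mul_comm, hNdef]
  obtain ⟨c, hc, hineq⟩ := core t N Sy SF SW Sff p ht hN hSy0 hSyN hW1u hW1l hW0u hW0l hff
  have hSFb : |SF| ≤ t*N := by
    have hr : t*Sy + t*(N - Sy) = t*N := by ring
    rw [abs_le]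
    constructor <;> linarith
  refine ⟨c, (Sy - c*SF)/N, hc, ?_, ?_⟩
  · rw [abs_div, abs_of_pos hN, div_le_iff₀ hN]
    have h1 : |Sy - c*SF| ≤ |Sy| + |c| * |SF| := by
      calc |Sy - c*SF| ≤ |Sy| + |c*SF| := abs_sub Sy (c*SF)
      _ = |Sy| + |c| * |SF| := by rw [abs_mul]
    have h2 : |c| * |SF| ≤ (1/2)*(t*N) :=
      mul_le_mul hc hSFb (abs_nonneg _) (by norm_num)
    have h3 : |Sy| = Sy := abs_of_nonneg hSy0
    nlinarith [h1, h2]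
  · set b := (Sy - c*SF)/N with hbdef
    have hbN : b*N = Sy - c*SF := by
      rw [hbdef]; exact div_mul_cancel₀ _ hN.ne'
    have hSA : ∑ i ∈ s, g i * (yv i - p) = SW - p*SF := by
      rw [hSWdef, hSFdef, Finset.mul_sum, ← Finset.sum_sub_distrib]
      exact Finset.sum_congr rfl (fun i hi => by ring)
    have hexp : ∑ i ∈ s, ((p - yv i)^2 - (c*g i + b - yv i)^2)
        = N*p^2 - 2*p*Sy - c^2*Sff - N*b^2 - 2*b*c*SF + 2*c*SW + 2*b*Sy := by
      have h1 : ∀ i ∈ s, (p - yv i)^2 - (c*g i + b - yv i)^2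
          = p^2 - (2*p)*yv i - c^2*(g i)^2 - b^2 - (2*b*c)*(g i)
            + (2*c)*(g i * yv i) + (2*b)*yv i := by
        intro i hi
        rcases hy i hi with h | h <;> rw [h] <;> ring
      rw [Finset.sum_congr rfl h1]
      simp only [Finset.sum_add_distrib, Finset.sum_sub_distrib, ← Finset.mul_sum,
        Finset.sum_const, nsmul_eq_mul]
      rfl
    have hidd : N*(N*p^2 - 2*p*Sy - c^2*Sff - N*b^2 - 2*b*c*SF + 2*c*SW + 2*b*Sy)
        = (N*p - Sy)^2 + 2*c*(N*SW - Sy*SF) - c^2*(N*Sff - SF^2) := by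
      linear_combination (Sy - c*SF - b*N) * hbN
    rw [hSA, hexp, div_le_iff₀ (by positivity : (0:ℝ) < N*t^4)]
    rw [div_le_iff₀ (by positivity : (0:ℝ) < t^4)] at hineq
    have hidd4 : (N*(N*p^2 - 2*p*Sy - c^2*Sff - N*b^2 - 2*b*c*SF + 2*c*SW + 2*b*Sy))*t^4
        = ((N*p - Sy)^2 + 2*c*(N*SW - Sy*SF) - c^2*(N*Sff - SF^2))*t^4 := by rw [hidd]
    linarith [hineq, hidd4]

/-- If contextual swap regret against all families bounded by `(1+√B)²` in a class `F`
closed under affine transformations is at most `α/B²`, then the L2-swap-multicalibration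
error against all families bounded by `B` is at most `α`. -/
theorem swap_regret_to_L2_swap_multicalibration {ι X : Type*}
    (P : Finset ℝ) (S : ℝ → Finset ι)
    (x : ι → X) (y : ι → ℝ) (hy : ∀ t, y t = 0 ∨ y t = 1)
    (T : ℝ) (hT : T = ∑ p ∈ P, ((S p).card : ℝ)) (hTpos : 0 < T)
    (F : Set (X → ℝ)) (haffine : ∀ f ∈ F, ∀ a b : ℝ, (fun z => a * f z + b) ∈ F)
    (B α : ℝ) (hB : 1 ≤ B)
    (hswap : ∀ f' : ℝ → X → ℝ,
      (∀ p ∈ P, f' p ∈ F ∧ ∀ z, (f' p z) ^ 2 ≤ (1 + Real.sqrt B) ^ 2) →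
      (1 / T) * ∑ p ∈ P, ∑ t ∈ S p, ((p - y t) ^ 2 - (f' p (x t) - y t) ^ 2) ≤ α / B ^ 2) :
    ∀ f : ℝ → X → ℝ, (∀ p ∈ P, f p ∈ F ∧ ∀ z, (f p z) ^ 2 ≤ B) →
      ∑ p ∈ P, (((S p).card : ℝ) / T) *
        ((1 / ((S p).card : ℝ)) * ∑ t ∈ S p, f p (x t) * (y t - p)) ^ 2 ≤ α := by
  intro f hf
  have hB0 : (0:ℝ) ≤ B := by linarith
  set t := Real.sqrt B with htdef
  have ht2 : t^2 = B := Real.sq_sqrt hB0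
  have ht0 : 0 ≤ t := Real.sqrt_nonneg B
  have ht : 1 ≤ t := by nlinarith
  have hB2t4 : B^2 = t^4 := by rw [← ht2]; ring
  have hex : ∀ p : ℝ, ∃ cb : ℝ × ℝ, p ∈ P →
      (|cb.1| ≤ 1/2 ∧ |cb.2| ≤ 1 + t/2 ∧
        ((S p).card : ℝ) * ((1/((S p).card : ℝ)) * ∑ i ∈ S p, f p (x i) * (y i - p))^2
          ≤ B^2 * ∑ i ∈ S p, ((p - y i)^2 - ((cb.1 * f p (x i) + cb.2) - y i)^2)) := by
    intro p
    by_cases hp : p ∈ P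
    · rcases Finset.eq_empty_or_nonempty (S p) with he | hne
      · refine ⟨(0,0), fun _ => ⟨by norm_num, ?_, by simp [he]⟩⟩
        rw [abs_of_nonneg (by norm_num : (0:ℝ) ≤ 0)]
        linarith
      · obtain ⟨c, b, hc, hb, hineq⟩ := perP (S p) (fun i => f p (x i)) y
          (fun i _ => hy i) t ht (fun i _ => by rw [ht2]; exact (hf p hp).2 (x i)) p hne
        refine ⟨(c, b), fun _ => ⟨hc, hb, ?_⟩⟩
        have hN : (0:ℝ) < ((S p).card : ℝ) := by exact_mod_cast Finset.card_pos.mpr hne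
        rw [hB2t4]
        have hc1 : ((S p).card : ℝ) * ((1/((S p).card : ℝ)) * ∑ i ∈ S p, f p (x i) * (y i - p))^2
            = ((∑ i ∈ S p, f p (x i) * (y i - p))^2 / (((S p).card : ℝ) * t^4)) * t^4 := by
          field_simp
        rw [hc1]
        calc ((∑ i ∈ S p, f p (x i) * (y i - p))^2 / (((S p).card : ℝ) * t^4)) * t^4
            ≤ (∑ i ∈ S p, ((p - y i)^2 - ((c * f p (x i) + b) - y i)^2)) * t^4 := by
              apply mul_le_mul_of_nonneg_right _ (by positivity)
              exact hineq
          _ = t^4 * ∑ i ∈ S p, ((p - y i)^2 - ((c * f p (x i) + b) - y i)^2) := by ring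
    · exact ⟨(0,0), fun h => absurd h hp⟩
  choose cb hcb using hex
  have hf'cond : ∀ p ∈ P, (fun z => (cb p).1 * f p z + (cb p).2) ∈ F ∧
      ∀ z, (((cb p).1 * f p z + (cb p).2)) ^ 2 ≤ (1 + Real.sqrt B) ^ 2 := by
    intro p hp
    obtain ⟨hc, hb, _⟩ := hcb p hp
    refine ⟨haffine (f p) (hf p hp).1 (cb p).1 (cb p).2, fun z => ?_⟩
    have hfz : (f p z)^2 ≤ t^2 := by rw [ht2]; exact (hf p hp).2 z
    have h1 : |f p z| ≤ t := by
      rw [abs_le]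
      constructor
      · nlinarith [sq_nonneg (f p z + t)]
      · nlinarith [sq_nonneg (f p z - t)]
    have habs : |(cb p).1 * f p z + (cb p).2| ≤ 1 + t := by
      calc |(cb p).1 * f p z + (cb p).2| ≤ |(cb p).1 * f p z| + |(cb p).2| := abs_add_le _ _
        _ = |(cb p).1| * |f p z| + |(cb p).2| := by rw [abs_mul]
        _ ≤ (1/2) * t + (1 + t/2) := by
            have := mul_le_mul hc h1 (abs_nonneg _) (by norm_num)
            linarith
        _ = 1 + t := by ring
    rw [abs_le] at habs
    rw [← htdef]
    exact sq_le_sq' (by linarith [habs.1]) habs.2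
  have hs := hswap (fun p z => (cb p).1 * f p z + (cb p).2) hf'cond
  have hstep : ∀ p ∈ P,
      (((S p).card : ℝ)/T) * ((1/((S p).card : ℝ)) * ∑ i ∈ S p, f p (x i) * (y i - p))^2
      ≤ (B^2 * (1/T)) * ∑ i ∈ S p, ((p - y i)^2 - (((cb p).1 * f p (x i) + (cb p).2) - y i)^2) := by
    intro p hp
    have h := (hcb p hp).2.2
    have hT0 : (0:ℝ) ≤ 1/T := by positivity
    have hq : (((S p).card : ℝ)/T) * ((1/((S p).card : ℝ)) * ∑ i ∈ S p, f p (x i) * (y i - p))^2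
        = (1/T) * (((S p).card : ℝ) * ((1/((S p).card : ℝ)) * ∑ i ∈ S p, f p (x i) * (y i - p))^2) := by
      ring
    rw [hq]
    calc (1/T) * (((S p).card : ℝ) * ((1/((S p).card : ℝ)) * ∑ i ∈ S p, f p (x i) * (y i - p))^2)
        ≤ (1/T) * (B^2 * ∑ i ∈ S p, ((p - y i)^2 - (((cb p).1 * f p (x i) + (cb p).2) - y i)^2)) :=
          mul_le_mul_of_nonneg_left h hT0
      _ = (B^2 * (1/T)) * ∑ i ∈ S p, ((p - y i)^2 - (((cb p).1 * f p (x i) + (cb p).2) - y i)^2) := by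
          ring
  calc ∑ p ∈ P, (((S p).card : ℝ) / T) *
        ((1 / ((S p).card : ℝ)) * ∑ i ∈ S p, f p (x i) * (y i - p)) ^ 2
      ≤ ∑ p ∈ P, (B^2 * (1/T)) * ∑ i ∈ S p, ((p - y i)^2 - (((cb p).1 * f p (x i) + (cb p).2) - y i)^2) :=
        Finset.sum_le_sum hstep
    _ = B^2 * ((1/T) * ∑ p ∈ P, ∑ i ∈ S p, ((p - y i)^2 - (((cb p).1 * f p (x i) + (cb p).2) - y i)^2)) := by
        rw [← Finset.mul_sum, mul_assoc]
    _ ≤ B^2 * (α/B^2) := by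
        apply mul_le_mul_of_nonneg_left _ (by positivity)
        exact hs
    _ = α := by field_simp
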